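/- Under the hypotheses of the annulus-asymptotics theorem, each Laurent coefficient a_{s,j} of h_s at z₀ with j < 0 vanishes; equivalently, for every nonnegative integer r and every s, the contour integral of (z - z₀)^r h_s(z) over a circle centered at z₀ inside the annulus is zero. -/

import Mathlib

open Metric Filter

lemma circleIntegral_finset_sum' {ι : Type*} (t : Finset ι) (f : ι → ℂ → ℂ) (c : ℂ) (R : ℝ)
    (h : ∀ i ∈ t, CircleIntegrable (f i) c R) :
    (∮ z in C(c, R), ∑ i ∈ t, f i z) = ∑ i ∈ t, ∮ z in C(c, R), f i z := by
  simp only [circleIntegral, Finset.smul_sum]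
  exact intervalIntegral.integral_finset_sum fun i hi => (h i hi).out

set_option maxHeartbeats 1000000

/-- Under the annulus-asymptotics hypotheses, every moment contour integral
`∮ (z - z₀)^r h_s(z) dz` over a circle inside the annulus vanishes; equivalently
all negative Laurent coefficients of each `h_s` at `z₀` vanish. -/
theorem stmt12 (ρ₁ ρ₂ : ℝ) (hρ₁ : 0 < ρ₁) (hρ : ρ₁ < ρ₂) (z₀ : ℂ)
    (H : ℝ → ℂ → ℂ) (h : ℕ → ℂ → ℂ)
    (hH : ∀ u : ℝ, 0 < u → AnalyticOn ℂ (H u) (ball z₀ ρ₂))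
    (hh : ∀ s : ℕ, AnalyticOn ℂ (h s) (ball z₀ ρ₂ \ {z₀}))
    (hexp : ∀ n : ℕ, ∃ C u₀ : ℝ, ∀ u : ℝ, u₀ ≤ u → ∀ z : ℂ,
      ρ₁ < ‖z - z₀‖ → ‖z - z₀‖ < ρ₂ →
      ‖H u z - ∑ s ∈ Finset.range n, h s z / (u : ℂ) ^ s‖ ≤ C / u ^ n) :
    ∀ (s r : ℕ) (ρ' : ℝ), ρ₁ < ρ' → ρ' < ρ₂ →
      (∮ z in C(z₀, ρ'), (z - z₀) ^ r * h s z) = 0 := by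
  intro s r ρ' hρ'₁ hρ'₂
  induction s using Nat.strong_induction_on with
  | _ s IH =>
  have hρ'0 : (0:ℝ) < ρ' := hρ₁.trans hρ'₁
  -- the sphere lies in the annulus
  have hsub : sphere z₀ ρ' ⊆ ball z₀ ρ₂ \ {z₀} := by
    intro z hz
    rw [mem_sphere_iff_norm] at hz
    refine ⟨by rw [mem_ball_iff_norm, hz]; exact hρ'₂, ?_⟩
    simp only [Set.mem_singleton_iff]
    intro hzz
    rw [hzz, sub_self, norm_zero] at hz
    exact absurd hz.symm (ne_of_gt hρ'0)
  -- continuity of the power factor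
  have hcpow : ContinuousOn (fun z : ℂ => (z - z₀) ^ r) (sphere z₀ ρ') :=
    ((continuous_id.sub continuous_const).pow r).continuousOn
  -- each moment integrand is circle integrable
  have hhint : ∀ t : ℕ, CircleIntegrable (fun z => (z - z₀) ^ r * h t z) z₀ ρ' := by
    intro t
    exact (hcpow.mul (((hh t).continuousOn).mono hsub)).circleIntegrable hρ'0.le
  -- `H u` integrand is circle integrable and Cauchy–Goursat gives zero integral
  have hball : closedBall z₀ ρ' ⊆ ball z₀ ρ₂ := closedBall_subset_ball hρ'₂
  have hHdiff : ∀ u : ℝ, 0 < u → ∀ z ∈ ball z₀ ρ₂,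
      DifferentiableAt ℂ (fun w => (w - z₀) ^ r * H u w) z := by
    intro u hu z hz
    have := ((isOpen_ball.analyticOn_iff_analyticOnNhd.mp (hH u hu)) z hz).differentiableAt
    exact ((differentiableAt_id.sub_const _).pow r).mul this
  have hHzero : ∀ u : ℝ, 0 < u → (∮ z in C(z₀, ρ'), (z - z₀) ^ r * H u z) = 0 := by
    intro u hu
    refine Complex.circleIntegral_eq_zero_of_differentiable_on_off_countable hρ'0.le
      Set.countable_empty (fun z hz => (hHdiff u hu z (hball hz)).continuousAt.continuousWithinAt)
      (fun z hz => hHdiff u hu z (ball_subset_ball hρ'₂.le hz.1))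
  have hHint : ∀ u : ℝ, 0 < u →
      CircleIntegrable (fun z => (z - z₀) ^ r * H u z) z₀ ρ' := by
    intro u hu
    refine ContinuousOn.circleIntegrable hρ'0.le ?_
    intro z hz
    exact (hHdiff u hu z ((hsub hz).1)).continuousAt.continuousWithinAt
  -- main estimate
  obtain ⟨C, u₀, hCu⟩ := hexp (s + 1)
  set I : ℕ → ℂ := fun t => ∮ z in C(z₀, ρ'), (z - z₀) ^ r * h t z with hI
  have key : ∀ u : ℝ, max u₀ 1 ≤ u → ‖I s‖ ≤ 2 * Real.pi * ρ' * (ρ' ^ r * C) / u := by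
    intro u hu
    have hu1 : (1:ℝ) ≤ u := le_trans (le_max_right _ _) hu
    have hu0 : (0:ℝ) < u := lt_of_lt_of_le one_pos hu1
    have huC : (u:ℂ) ≠ 0 := by exact_mod_cast hu0.ne'
    -- the partial sum integrand
    set g : ℂ → ℂ := fun z => ∑ t ∈ Finset.range (s + 1), (z - z₀) ^ r * (h t z / (u:ℂ) ^ t)
      with hg
    have hgint : CircleIntegrable g z₀ ρ' := by
      refine ContinuousOn.circleIntegrable hρ'0.le ?_
      refine continuousOn_finset_sum _ fun t _ => hcpow.mul ?_
      exact (((hh t).continuousOn).mono hsub).div_const _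
    -- the integral of g equals (u^s)⁻¹ * I s
    have htint : ∀ t : ℕ, CircleIntegrable
        (fun z => (z - z₀) ^ r * (h t z / (u:ℂ) ^ t)) z₀ ρ' := by
      intro t
      exact (hcpow.mul ((((hh t).continuousOn).mono hsub).div_const _)).circleIntegrable hρ'0.le
    have hterm : ∀ t : ℕ,
        (∮ z in C(z₀, ρ'), (z - z₀) ^ r * (h t z / (u:ℂ) ^ t)) = ((u:ℂ) ^ t)⁻¹ * I t := by
      intro t
      have heq : (fun z => (z - z₀) ^ r * (h t z / (u:ℂ) ^ t))
          = fun z => ((u:ℂ) ^ t)⁻¹ • ((z - z₀) ^ r * h t z) := by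
        funext z; simp only [smul_eq_mul, div_eq_mul_inv]; ring
      rw [heq, circleIntegral.integral_smul, smul_eq_mul]
    have hgval : (∮ z in C(z₀, ρ'), g z) = ((u:ℂ) ^ s)⁻¹ * I s := by
      rw [hg, circleIntegral_finset_sum' _ _ _ _ (fun t _ => htint t),
        Finset.sum_congr rfl (fun t _ => hterm t), Finset.sum_range_succ]
      have hIH : ∀ t ∈ Finset.range s, ((u:ℂ) ^ t)⁻¹ * I t = 0 := by
        intro t ht
        have h0 : I t = 0 := IH t (Finset.mem_range.mp ht)
        rw [h0, mul_zero]
      rw [Finset.sum_congr rfl hIH]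
      simp
    -- the remainder integral
    have hsplit : (∮ z in C(z₀, ρ'), ((z - z₀) ^ r * H u z - g z))
        = (∮ z in C(z₀, ρ'), (z - z₀) ^ r * H u z) - ∮ z in C(z₀, ρ'), g z :=
      circleIntegral.integral_sub (hHint u hu0) hgint
    have hrem : ‖∮ z in C(z₀, ρ'), ((z - z₀) ^ r * H u z - g z)‖
        ≤ 2 * Real.pi * ρ' * (ρ' ^ r * (C / u ^ (s + 1))) := by
      refine circleIntegral.norm_integral_le_of_norm_le_const hρ'0.le ?_
      intro z hz
      have hznorm : ‖z - z₀‖ = ρ' := mem_sphere_iff_norm.mp hz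
      have h1 : ρ₁ < ‖z - z₀‖ := by
        rw [hznorm]; exact hρ'₁
      have h2 : ‖z - z₀‖ < ρ₂ := by
        rw [hznorm]; exact hρ'₂
      have hbound := hCu u (le_trans (le_max_left _ _) hu) z h1 h2
      have : (z - z₀) ^ r * H u z - g z
          = (z - z₀) ^ r * (H u z - ∑ t ∈ Finset.range (s + 1), h t z / (u:ℂ) ^ t) := by
        simp only [hg, mul_sub, Finset.mul_sum, mul_div_assoc]
      rw [this, norm_mul, norm_pow, hznorm]
      exact mul_le_mul_of_nonneg_left hbound (pow_nonneg hρ'0.le r)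
    -- combine
    have hzero := hHzero u hu0
    rw [hzero, hgval] at hsplit
    have hnorm : ‖((u:ℂ) ^ s)⁻¹ * I s‖ ≤ 2 * Real.pi * ρ' * (ρ' ^ r * (C / u ^ (s + 1))) := by
      calc ‖((u:ℂ) ^ s)⁻¹ * I s‖ = ‖(0 : ℂ) - ((u:ℂ) ^ s)⁻¹ * I s‖ := by simp
        _ ≤ _ := by rw [← hsplit]; exact hrem
    have hnorm' : ‖I s‖ / u ^ s ≤ 2 * Real.pi * ρ' * (ρ' ^ r * (C / u ^ (s + 1))) := by
      rwa [norm_mul, norm_inv, norm_pow, Complex.norm_real, Real.norm_of_nonneg hu0.le,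
        inv_mul_eq_div] at hnorm
    have hus : (0:ℝ) < u ^ s := pow_pos hu0 s
    have := (div_le_iff₀ hus).mp hnorm'
    calc ‖I s‖ ≤ 2 * Real.pi * ρ' * (ρ' ^ r * (C / u ^ (s + 1))) * u ^ s := this
      _ = 2 * Real.pi * ρ' * (ρ' ^ r * C) / u := by
          rw [pow_succ]
          field_simp
  -- let u → ∞
  have htend : Tendsto (fun u : ℝ => 2 * Real.pi * ρ' * (ρ' ^ r * C) / u) atTop (nhds 0) :=
    tendsto_const_nhds.div_atTop tendsto_id
  have : ‖I s‖ ≤ 0 :=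
    ge_of_tendsto htend (eventually_atTop.mpr ⟨max u₀ 1, fun u hu => key u hu⟩)
  have : I s = 0 := norm_le_zero_iff.mp this
  exact this
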